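/- (Achievability of the SPIR capacity.) For all integers K ≥ 2 and N ≥ 2, there exists a zero-error SPIR scheme with message length L = N − 1 bits, in which each answer A_n^{[k]} is a single bit (so the total download is D = N and the rate is (N−1)/N = 1 − 1/N), and in which the common randomness S is a single uniform bit (so H(S) = 1 bit and ρ = H(S)/L = 1/(N−1)). -/

import Mathlib

open Finset

attribute [local instance] Classical.propDecidable

/-- Probability that the random variable `X` takes the value `a`, on a finite
sample space `Ω` with probability mass function `p`. -/
noncomputable def prob {Ω α : Type*} [Fintype Ω] (p : Ω → ℝ) (X : Ω → α) (a : α) : ℝ :=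
  ∑ ω : Ω, if X ω = a then p ω else 0

/-- Shannon entropy (in bits) of the random variable `X`. -/
noncomputable def ent {Ω α : Type*} [Fintype Ω] [Fintype α] (p : Ω → ℝ) (X : Ω → α) : ℝ :=
  - ∑ a : α, prob p X a * Real.logb 2 (prob p X a)

/-- Conditional Shannon entropy (in bits) `H(X | Y)`. -/
noncomputable def condEnt {Ω α β : Type*} [Fintype Ω] [Fintype α] [Fintype β]
    (p : Ω → ℝ) (X : Ω → α) (Y : Ω → β) : ℝ :=
  ent p (fun ω => (X ω, Y ω)) - ent p Y

/-- Shannon mutual information (in bits) `I(X ; Y)`. -/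
noncomputable def mutInfo {Ω α β : Type*} [Fintype Ω] [Fintype α] [Fintype β]
    (p : Ω → ℝ) (X : Ω → α) (Y : Ω → β) : ℝ :=
  ent p X + ent p Y - ent p (fun ω => (X ω, Y ω))

/-- `X` and `Y` are identically distributed. -/
def IdentDist {Ω α : Type*} [Fintype Ω] (p : Ω → ℝ) (X Y : Ω → α) : Prop :=
  ∀ a : α, prob p X a = prob p Y a

/-- `X` is uniformly distributed on `α`. -/
def Unif {Ω α : Type*} [Fintype Ω] [Fintype α] (p : Ω → ℝ) (X : Ω → α) : Prop :=
  ∀ a : α, prob p X a = 1 / (Fintype.card α : ℝ)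

/-- A zero-error SPIR scheme with `K` messages of `L = N − 1` bits each and `N` databases,
in which each answer is a *single bit* (so the total download is `D = N` bits and the rate
is `(N−1)/N = 1 − 1/N`) and the common randomness `S` is a single bit. -/
structure OneBitAnswerSPIR (K N : ℕ) where
  /-- the finite sample space -/
  Ω : Type
  [instΩ : Fintype Ω]
  /-- the probability mass function -/
  p : Ω → ℝ
  p_nonneg : ∀ ω, 0 ≤ p ω
  p_sum : ∑ ω : Ω, p ω = 1
  /-- value type of the user randomness -/
  𝓕 : Type
  [inst𝓕 : Fintype 𝓕]
  /-- value types of the queries -/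
  𝓠 : Fin N → Type
  [inst𝓠 : ∀ n, Fintype (𝓠 n)]
  /-- the messages, each of `L = N − 1` bits -/
  W : Fin K → Ω → (Fin (N - 1) → ZMod 2)
  /-- the common randomness: a single bit -/
  S : Ω → ZMod 2
  /-- the user randomness -/
  F : Ω → 𝓕
  /-- the queries -/
  Q : ∀ (_ : Fin K) (n : Fin N), Ω → 𝓠 n
  /-- the answers: a single bit each -/
  A : Fin K → Fin N → Ω → ZMod 2
  /-- each message is uniformly distributed on the set of `(N−1)`-bit strings -/
  hWunif : ∀ k, Unif p (W k)
  /-- the messages, the common randomness and the user randomness are mutually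
  independent -/
  hIndep : ∀ (w : ∀ _ : Fin K, Fin (N - 1) → ZMod 2) (s : ZMod 2) (f : 𝓕),
    prob p (fun ω => ((fun k => W k ω), S ω, F ω)) (w, s, f)
      = (∏ k, prob p (W k) (w k)) * prob p S s * prob p F f
  /-- each query is a deterministic function of `F` -/
  hQ : ∀ k n, ∃ g : 𝓕 → 𝓠 n, ∀ ω, Q k n ω = g (F ω)
  /-- each answer is a deterministic function of the query, the messages and `S` -/
  hA : ∀ k n, ∃ g : 𝓠 n → (∀ _ : Fin K, Fin (N - 1) → ZMod 2) → ZMod 2 → ZMod 2,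
    ∀ ω, A k n ω = g (Q k n ω) (fun j => W j ω) (S ω)
  /-- correctness: `W_k` is a deterministic function of the answers and `F` -/
  hCorrect : ∀ k, ∃ g : (Fin N → ZMod 2) → 𝓕 → (Fin (N - 1) → ZMod 2),
    ∀ ω, W k ω = g (fun n => A k n ω) (F ω)
  /-- user-privacy -/
  hUserPriv : ∀ (n : Fin N) (k k' : Fin K),
    IdentDist p (fun ω => (Q k n ω, A k n ω, (fun j => W j ω), S ω))
                (fun ω => (Q k' n ω, A k' n ω, (fun j => W j ω), S ω))
  /-- database-privacy -/
  hDBPriv : ∀ k : Fin K,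
    mutInfo p (fun ω => (fun j : {j : Fin K // j ≠ k} => W j.1 ω))
      (fun ω => ((fun n => Q k n ω), (fun n => A k n ω), F ω)) = 0

attribute [instance] OneBitAnswerSPIR.instΩ OneBitAnswerSPIR.inst𝓕 OneBitAnswerSPIR.inst𝓠

section lemmas
variable {Ω Ω' α β : Type*} [Fintype Ω] [Fintype Ω']

/-- L1: reindexing along an equiv, constant pmf. -/
lemma prob_comp_equiv (e : Ω' ≃ Ω) (c : ℝ) (X : Ω → α) (a : α) :
    prob (fun _ => c) (fun ω' => X (e ω')) a = prob (fun _ => c) X a := by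
  unfold prob
  exact Equiv.sum_comp e (fun ω => if X ω = a then c else 0)

/-- L1': reindexing along a bijection Ω → Ω. -/
lemma prob_comp_bij (φ : Ω → Ω) (hφ : Function.Bijective φ) (c : ℝ) (X : Ω → α) (a : α) :
    prob (fun _ => c) (fun ω => X (φ ω)) a = prob (fun _ => c) X a :=
  prob_comp_equiv (Equiv.ofBijective φ hφ) c X a

/-- L4: total probability. -/
lemma sum_prob [Fintype α] (p : Ω → ℝ) (X : Ω → α) :
    ∑ a : α, prob p X a = ∑ ω : Ω, p ω := by
  unfold prob
  rw [Finset.sum_comm]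
  exact Finset.sum_congr rfl fun ω _ => by
    rw [Finset.sum_ite_eq univ (X ω) (fun _ => p ω)]
    simp

/-- L2: independence of coordinate functions on a product with product constant pmf. -/
lemma prob_prod_pair {A B : Type*} [Fintype A] [Fintype B] (cA cB : ℝ)
    (g : A → α) (h : B → β) (a : α) (b : β) :
    prob (fun _ : A × B => cA * cB) (fun x => (g x.1, h x.2)) (a, b)
      = prob (fun _ : A => cA) g a * prob (fun _ : B => cB) h b := by
  unfold prob
  rw [Fintype.sum_prod_type, Finset.sum_mul_sum]
  refine Finset.sum_congr rfl fun x _ => Finset.sum_congr rfl fun y _ => ?_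
  by_cases h1 : g x = a <;> by_cases h2 : h y = b <;> simp [h1, h2, Prod.ext_iff]

/-- L3: marginal of a function of the first coordinate. -/
lemma prob_fst {A B : Type*} [Fintype A] [Fintype B] (cA cB : ℝ)
    (hB : cB * (Fintype.card B : ℝ) = 1) (g : A → α) (a : α) :
    prob (fun _ : A × B => cA * cB) (fun x => g x.1) a = prob (fun _ : A => cA) g a := by
  unfold prob
  rw [Fintype.sum_prod_type]
  have : ∀ x : A, (∑ _y : B, if g x = a then cA * cB else 0)
      = (if g x = a then cA else 0) := by
    intro x
    by_cases h1 : g x = a <;> simp [h1]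
    linear_combination cA * hB
  simp only [this]

/-- L3': marginal of a function of the second coordinate. -/
lemma prob_snd {A B : Type*} [Fintype A] [Fintype B] (cA cB : ℝ)
    (hA : cA * (Fintype.card A : ℝ) = 1) (h : B → β) (b : β) :
    prob (fun _ : A × B => cA * cB) (fun x => h x.2) b = prob (fun _ : B => cB) h b := by
  unfold prob
  rw [Fintype.sum_prod_type_right]
  have : ∀ y : B, (∑ _x : A, if h y = b then cA * cB else 0)
      = (if h y = b then cB else 0) := by
    intro y
    by_cases h1 : h y = b <;> simp [h1]
    linear_combination cB * hA
  simp only [this]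

/-- L5: independence implies zero mutual information. -/
lemma mutInfo_zero_of_indep [Fintype α] [Fintype β] (p : Ω → ℝ)
    (hsum : ∑ ω : Ω, p ω = 1) (X : Ω → α) (Y : Ω → β)
    (h : ∀ a b, prob p (fun ω => (X ω, Y ω)) (a, b) = prob p X a * prob p Y b) :
    mutInfo p X Y = 0 := by
  have hX : ∑ a : α, prob p X a = 1 := by rw [sum_prob, hsum]
  have hY : ∑ b : β, prob p Y b = 1 := by rw [sum_prob, hsum]
  have key : ∀ (x y : ℝ), (x * y) * Real.logb 2 (x * y)
      = y * (x * Real.logb 2 x) + x * (y * Real.logb 2 y) := by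
    intro x y
    by_cases hx : x = 0
    · simp [hx]
    by_cases hy : y = 0
    · simp [hy]
    rw [Real.logb_mul hx hy]; ring
  have hpair : ent p (fun ω => (X ω, Y ω)) = ent p X + ent p Y := by
    unfold ent
    rw [Fintype.sum_prod_type]
    have : ∀ a : α, ∑ b : β, prob p (fun ω => (X ω, Y ω)) (a, b)
        * Real.logb 2 (prob p (fun ω => (X ω, Y ω)) (a, b))
        = (prob p X a * Real.logb 2 (prob p X a)) * (∑ b : β, prob p Y b)
          + prob p X a * (∑ b : β, prob p Y b * Real.logb 2 (prob p Y b)) := by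
      intro a
      rw [Finset.mul_sum, Finset.mul_sum, ← Finset.sum_add_distrib]
      refine Finset.sum_congr rfl fun b _ => ?_
      rw [h a b, key]; ring
    simp only [this, hY, mul_one]
    rw [Finset.sum_add_distrib, ← Finset.sum_mul, hX, one_mul]
    ring
  unfold mutInfo
  rw [hpair]; ring

/-- L6: shift trick for uniformity. -/
lemma unif_of_shift [Fintype α] (c : ℝ) (hsum : ∑ _ω : Ω, c = 1) (X : Ω → α)
    (h : ∀ a a' : α, ∃ φ : Ω → Ω, Function.Involutive φ ∧ ∀ ω, X (φ ω) = a' ↔ X ω = a) :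
    Unif (fun _ => c) X := by
  have heq : ∀ a a' : α, prob (fun _ => c) X a = prob (fun _ => c) X a' := by
    intro a a'
    obtain ⟨φ, hinv, hiff⟩ := h a a'
    have : prob (fun _ => c) X a' = prob (fun _ : Ω => c) (fun ω => X (φ ω)) a' := by
      rw [prob_comp_bij φ hinv.bijective]
    rw [this]
    unfold prob
    exact Finset.sum_congr rfl fun ω _ => by rw [if_congr (hiff ω) rfl rfl]
  intro a
  have hne : (Fintype.card α : ℝ) ≠ 0 := by
    have : Nonempty α := ⟨a⟩
    simp [Fintype.card_ne_zero]
  have h1 : ∑ a' : α, prob (fun _ => c) X a' = 1 := by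
    rw [sum_prob]; exact hsum
  have h2 : ∑ a' : α, prob (fun _ => c) X a' = (Fintype.card α : ℝ) * prob (fun _ => c) X a := by
    rw [Finset.sum_congr rfl fun a' _ => (heq a' a)]
    simp [Finset.sum_const, mul_comm]
  rw [h2] at h1
  field_simp
  linarith

/-- L7: identical distribution via a measure-preserving involution. -/
lemma identDist_of_invol (c : ℝ) (X Y : Ω → α) (φ : Ω → Ω) (hinv : Function.Involutive φ)
    (hXY : ∀ ω, Y (φ ω) = X ω) : IdentDist (fun _ => c) X Y := by
  intro a
  have : prob (fun _ : Ω => c) (fun ω => Y (φ ω)) a = prob (fun _ => c) Y a :=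
    prob_comp_bij φ hinv.bijective c Y a
  rw [← this]
  unfold prob
  exact Finset.sum_congr rfl fun ω _ => by simp only [hXY ω]

end lemmas

namespace SPIRc

variable (K N : ℕ)

abbrev Msg := Fin (N-1) → ZMod 2
abbrev Mat := Fin K → Fin (N-1) → ZMod 2
abbrev Om := Mat K N × ZMod 2 × Mat K N

noncomputable def c : ℝ := (Fintype.card (Om K N) : ℝ)⁻¹

def qdet (k : Fin K) (n : Fin N) (f : Mat K N) : Mat K N :=
  fun j i => f j i + (if j = k ∧ (i : ℕ) + 1 = (n : ℕ) then 1 else 0)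

def Adet (q w : Mat K N) (s : ZMod 2) : ZMod 2 :=
  (∑ j : Fin K, ∑ i : Fin (N-1), q j i * w j i) + s

lemma Adet_qdet (k : Fin K) (n : Fin N) (f w : Mat K N) (s : ZMod 2) :
    Adet K N (qdet K N k n f) w s
      = (∑ i : Fin (N-1), if (i : ℕ) + 1 = (n : ℕ) then w k i else 0) + Adet K N f w s := by
  unfold Adet qdet
  have h1 : ∀ j i, (f j i + (if j = k ∧ (i : ℕ) + 1 = (n : ℕ) then 1 else 0)) * w j i
      = f j i * w j i + (if j = k then (if (i : ℕ) + 1 = (n : ℕ) then w j i else 0) else 0) := by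
    intro j i
    by_cases hj : j = k <;> by_cases hi : (i : ℕ) + 1 = (n : ℕ) <;>
      simp [hj, hi, add_mul]
  simp only [h1, Finset.sum_add_distrib]
  have h2 : ∑ j : Fin K, ∑ i : Fin (N-1), (if j = k then (if (i : ℕ) + 1 = (n : ℕ) then w j i else 0) else 0)
      = ∑ i : Fin (N-1), if (i : ℕ) + 1 = (n : ℕ) then w k i else 0 := by
    rw [Finset.sum_comm]
    refine Finset.sum_congr rfl fun i _ => ?_
    rw [Finset.sum_ite_eq' univ k (fun j => if (i : ℕ) + 1 = (n : ℕ) then w j i else 0)]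
    simp
  rw [h2]
  ring

lemma unit_sum (i0 : Fin (N-1)) (v : Fin (N-1) → ZMod 2) (n : Fin N)
    (hn : (n : ℕ) = (i0 : ℕ) + 1) :
    (∑ i : Fin (N-1), if (i : ℕ) + 1 = (n : ℕ) then v i else 0) = v i0 := by
  have h : ∀ i : Fin (N-1), ((i : ℕ) + 1 = (n : ℕ) ↔ i = i0) := by
    intro i
    rw [hn]
    constructor
    · intro h; exact Fin.val_injective (by omega)
    · intro h; subst h; rfl
  rw [Finset.sum_congr rfl fun i _ => if_congr (h i) rfl rfl,
    Finset.sum_ite_eq' univ i0 v]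
  simp

lemma zero_sum (v : Fin (N-1) → ZMod 2) (n : Fin N) (hn : (n : ℕ) = 0) :
    (∑ i : Fin (N-1), if (i : ℕ) + 1 = (n : ℕ) then v i else 0) = 0 := by
  rw [hn]
  simp


def Wv (k : Fin K) (ω : Om K N) : Msg N := ω.1 k
def Sv (ω : Om K N) : ZMod 2 := ω.2.1
def Fv (ω : Om K N) : Mat K N := ω.2.2
def Qv (k : Fin K) (n : Fin N) (ω : Om K N) : Mat K N := qdet K N k n ω.2.2
def Av (k : Fin K) (n : Fin N) (ω : Om K N) : ZMod 2 := Adet K N (Qv K N k n ω) ω.1 ω.2.1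

lemma Av_eq (k : Fin K) (n : Fin N) (ω : Om K N) :
    Av K N k n ω
      = (∑ i : Fin (N-1), if (i : ℕ) + 1 = (n : ℕ) then ω.1 k i else 0)
        + Adet K N ω.2.2 ω.1 ω.2.1 := by
  unfold Av Qv
  rw [Adet_qdet]

lemma correct_eq (hN : 2 ≤ N) (k : Fin K) (ω : Om K N) (i : Fin (N-1)) :
    Av K N k ⟨(i : ℕ) + 1, by have := i.isLt; omega⟩ ω
      + Av K N k ⟨0, by omega⟩ ω = ω.1 k i := by
  rw [Av_eq, Av_eq, unit_sum N i (ω.1 k) _ rfl, zero_sum N (ω.1 k) _ rfl,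
    zero_add, add_assoc, CharTwo.add_self_eq_zero, add_zero]

/-- the user-privacy involution -/
def upφ (k k' : Fin K) (n : Fin N) (ω : Om K N) : Om K N :=
  (ω.1, ω.2.1, fun j i => ω.2.2 j i
    + ((if j = k ∧ (i : ℕ) + 1 = (n : ℕ) then 1 else 0)
      + (if j = k' ∧ (i : ℕ) + 1 = (n : ℕ) then 1 else 0)))

lemma upφ_invol (k k' : Fin K) (n : Fin N) : Function.Involutive (upφ K N k k' n) := by
  intro ω
  unfold upφ
  refine Prod.ext rfl (Prod.ext rfl ?_)
  funext j i
  simp only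
  rw [add_assoc, CharTwo.add_self_eq_zero, add_zero]

lemma upφ_Q (k k' : Fin K) (n : Fin N) (ω : Om K N) :
    Qv K N k' n (upφ K N k k' n ω) = Qv K N k n ω := by
  funext j i
  unfold Qv qdet upφ
  simp only
  by_cases h1 : j = k <;> by_cases h2 : j = k' <;>
    by_cases h3 : (i : ℕ) + 1 = (n : ℕ) <;>
    simp [h1, h2, h3, add_assoc, CharTwo.add_self_eq_zero]

lemma upφ_A (k k' : Fin K) (n : Fin N) (ω : Om K N) :
    Av K N k' n (upφ K N k k' n ω) = Av K N k n ω := by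
  unfold Av
  rw [upφ_Q]
  rfl

/-- the database-privacy involution -/
def dbψ (ω : Om K N) : Om K N :=
  (ω.1, ω.2.1 + ∑ j : Fin K, ∑ i : Fin (N-1), ω.2.2 j i * ω.1 j i, ω.2.2)

lemma dbψ_invol : Function.Involutive (dbψ K N) := by
  intro ω
  unfold dbψ
  refine Prod.ext rfl (Prod.ext ?_ rfl)
  simp only
  rw [add_assoc, CharTwo.add_self_eq_zero, add_zero]

lemma dbψ_A (k : Fin K) (n : Fin N) (ω : Om K N) :
    Av K N k n (dbψ K N ω)
      = (∑ i : Fin (N-1), if (i : ℕ) + 1 = (n : ℕ) then ω.1 k i else 0) + ω.2.1 := by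
  rw [Av_eq]
  show _ + Adet K N ω.2.2 ω.1 (ω.2.1 + ∑ j : Fin K, ∑ i : Fin (N-1), ω.2.2 j i * ω.1 j i) = _
  unfold Adet
  congr 1
  rw [add_comm ω.2.1, ← add_assoc, CharTwo.add_self_eq_zero, zero_add]

end SPIRc


namespace SPIRc
variable (K N : ℕ)

lemma z2shift : ∀ x a a' : ZMod 2, (x + (a + a') = a' ↔ x = a) := by decide

lemma vshift (w a a' : Fin (N-1) → ZMod 2) :
    (fun i => w i + (a i + a' i)) = a' ↔ w = a := by
  rw [funext_iff, funext_iff]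
  exact forall_congr' fun i => z2shift (w i) (a i) (a' i)

lemma mshift (w a a' : Mat K N) :
    (fun j i => w j i + (a j i + a' j i)) = a' ↔ w = a := by
  rw [funext_iff, funext_iff]
  refine forall_congr' fun j => ?_
  rw [funext_iff, funext_iff]
  exact forall_congr' fun i => z2shift (w j i) (a j i) (a' j i)

lemma card_om_pos : 0 < Fintype.card (Om K N) := Fintype.card_pos

lemma c_pos : 0 < c K N := by
  unfold c
  exact inv_pos.mpr (by exact_mod_cast card_om_pos K N)

lemma sum_c : ∑ _ω : Om K N, c K N = 1 := by
  unfold c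
  rw [Finset.sum_const, Finset.card_univ, nsmul_eq_mul]
  exact mul_inv_cancel₀ (by exact_mod_cast (card_om_pos K N).ne')

lemma unif_W (k : Fin K) : Unif (fun _ : Om K N => c K N) (Wv K N k) := by
  apply unif_of_shift (c K N) (sum_c K N)
  intro a a'
  refine ⟨fun ω => (fun j i => ω.1 j i + (if j = k then a i + a' i else 0), ω.2), ?_, ?_⟩
  · intro ω
    refine Prod.ext ?_ rfl
    funext j i
    simp only
    by_cases hj : j = k <;>
      simp [hj, add_assoc, CharTwo.add_self_eq_zero]
  · intro ω
    have h1 : Wv K N k (fun j i => ω.1 j i + (if j = k then a i + a' i else 0), ω.2)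
        = fun i => ω.1 k i + (a i + a' i) := by
      funext i; simp [Wv]
    rw [h1]
    exact vshift N (ω.1 k) a a'

lemma unif_S : Unif (fun _ : Om K N => c K N) (Sv K N) := by
  apply unif_of_shift (c K N) (sum_c K N)
  intro a a'
  refine ⟨fun ω => (ω.1, ω.2.1 + (a + a'), ω.2.2), ?_, ?_⟩
  · intro ω
    refine Prod.ext rfl (Prod.ext ?_ rfl)
    simp only
    rw [add_assoc, CharTwo.add_self_eq_zero, add_zero]
  · intro ω
    exact z2shift (ω.2.1) a a'

lemma unif_F : Unif (fun _ : Om K N => c K N) (Fv K N) := by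
  apply unif_of_shift (c K N) (sum_c K N)
  intro a a'
  refine ⟨fun ω => (ω.1, ω.2.1, fun j i => ω.2.2 j i + (a j i + a' j i)), ?_, ?_⟩
  · intro ω
    refine Prod.ext rfl (Prod.ext rfl ?_)
    funext j i
    simp only
    rw [add_assoc, CharTwo.add_self_eq_zero, add_zero]
  · intro ω
    exact mshift K N (ω.2.2) a a'

lemma prob_point (x : Om K N) :
    prob (fun _ : Om K N => c K N) (fun ω => ω) x = c K N := by
  unfold prob
  simp

lemma card_eqs :
    (Fintype.card (Om K N) : ℝ)
      = (Fintype.card (Msg N) : ℝ) ^ K * (2 * (Fintype.card (Msg N) : ℝ) ^ K) := by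
  have h1 : Fintype.card (Mat K N) = Fintype.card (Msg N) ^ K := by
    rw [Fintype.card_fun]
    simp
  have h2 : Fintype.card (Om K N)
      = Fintype.card (Mat K N) * (Fintype.card (ZMod 2) * Fintype.card (Mat K N)) := by
    simp [Fintype.card_prod]
  rw [h2, h1]
  push_cast
  rw [ZMod.card 2]
  push_cast
  ring

lemma indep_all (w : Mat K N) (s : ZMod 2) (f : Mat K N) :
    prob (fun _ : Om K N => c K N)
        (fun ω : Om K N => ((fun k => Wv K N k ω), Sv K N ω, Fv K N ω)) (w, s, f)
      = (∏ k : Fin K, prob (fun _ : Om K N => c K N) (Wv K N k) (w k))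
        * prob (fun _ : Om K N => c K N) (Sv K N) s
        * prob (fun _ : Om K N => c K N) (Fv K N) f := by
  have hL : prob (fun _ : Om K N => c K N)
      (fun ω : Om K N => ((fun k => Wv K N k ω), Sv K N ω, Fv K N ω)) (w, s, f)
      = c K N := prob_point K N (w, s, f)
  rw [hL]
  have hW : ∀ k : Fin K, prob (fun _ : Om K N => c K N) (Wv K N k) (w k)
      = 1 / (Fintype.card (Msg N) : ℝ) := fun k => unif_W K N k (w k)
  have hS : prob (fun _ : Om K N => c K N) (Sv K N) s = 1 / 2 := by
    rw [unif_S K N s, ZMod.card 2]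
    norm_num
  have hF : prob (fun _ : Om K N => c K N) (Fv K N) f
      = 1 / ((Fintype.card (Msg N) : ℝ) ^ K) := by
    rw [unif_F K N f]
    congr 1
    rw [Fintype.card_fun]
    push_cast
    simp
  simp only [hW, hS, hF, Finset.prod_const, Finset.card_univ, Fintype.card_fin]
  unfold c
  rw [card_eqs]
  have hpos : (0:ℝ) < (Fintype.card (Msg N) : ℝ) := by
    exact_mod_cast Fintype.card_pos
  field_simp
  ring
  rw [← mul_pow, mul_inv_cancel₀ hpos.ne', one_pow]

lemma db_priv (hN : 2 ≤ N) (k : Fin K) :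
    mutInfo (fun _ : Om K N => c K N)
      (fun ω : Om K N => (fun j : {j : Fin K // j ≠ k} => Wv K N j.1 ω))
      (fun ω : Om K N => ((fun n : Fin N => Qv K N k n ω),
        (fun n : Fin N => Av K N k n ω), Fv K N ω)) = 0 := by
  classical
  set X : Om K N → ({j : Fin K // j ≠ k} → Msg N) :=
    fun ω => (fun j : {j : Fin K // j ≠ k} => Wv K N j.1 ω) with hXdef
  set Y : Om K N → (Fin N → Mat K N) × (Fin N → ZMod 2) × Mat K N :=
    fun ω => ((fun n : Fin N => Qv K N k n ω),
      (fun n : Fin N => Av K N k n ω), Fv K N ω) with hYdef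
  let R := ({j : Fin K // j ≠ k} → Msg N)
  let B := (Msg N × (ZMod 2 × Mat K N))
  let h : B → (Fin N → Mat K N) × (Fin N → ZMod 2) × Mat K N :=
    fun x => ((fun n : Fin N => qdet K N k n x.2.2),
      (fun n : Fin N => (∑ i : Fin (N-1), if (i : ℕ) + 1 = (n : ℕ) then x.1 i else 0) + x.2.1),
      x.2.2)
  let e' : Om K N ≃ R × B :=
    (Equiv.prodCongr (Equiv.piSplitAt k (fun _ => Msg N)) (Equiv.refl _)).trans
      ((Equiv.prodCongr (Equiv.prodComm _ _) (Equiv.refl _)).trans (Equiv.prodAssoc _ _ _))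
  set cA : ℝ := (Fintype.card R : ℝ)⁻¹ with hcA
  set cB : ℝ := (Fintype.card B : ℝ)⁻¹ with hcB
  have hcardA : cA * (Fintype.card R : ℝ) = 1 :=
    inv_mul_cancel₀ (by exact_mod_cast Fintype.card_pos.ne')
  have hcardB : cB * (Fintype.card B : ℝ) = 1 :=
    inv_mul_cancel₀ (by exact_mod_cast Fintype.card_pos.ne')
  have hc : c K N = cA * cB := by
    unfold c
    rw [Fintype.card_congr e', Fintype.card_prod]
    push_cast
    rw [mul_inv]
  -- Y after applying the involution dbψ
  have hYψ : ∀ ω : Om K N, Y (dbψ K N ω) = h ((e' ω).2) := by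
    intro ω
    refine Prod.ext rfl (Prod.ext ?_ rfl)
    funext n
    exact dbψ_A K N k n ω
  have hXψ : ∀ ω : Om K N, X (dbψ K N ω) = (e' ω).1 := fun ω => rfl
  apply mutInfo_zero_of_indep _ (sum_c K N)
  intro a b
  have hX : prob (fun _ : Om K N => c K N) X a = prob (fun _ : R => cA) (fun r => r) a := by
    have h1 : prob (fun _ : Om K N => c K N) X a
        = prob (fun _ : R × B => c K N) (fun x => x.1) a :=
      prob_comp_equiv e' (c K N) (fun x : R × B => x.1) a
    rw [h1, hc]
    exact prob_fst cA cB hcardB (fun r => r) a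
  have hY : prob (fun _ : Om K N => c K N) Y b = prob (fun _ : B => cB) h b := by
    have h0 : prob (fun _ : Om K N => c K N) Y b
        = prob (fun _ : Om K N => c K N) (fun ω => Y (dbψ K N ω)) b :=
      (prob_comp_bij (dbψ K N) (dbψ_invol K N).bijective (c K N) Y b).symm
    have h1 : (fun ω : Om K N => Y (dbψ K N ω)) = fun ω => h ((e' ω).2) := funext hYψ
    have h2 : prob (fun _ : Om K N => c K N) (fun ω : Om K N => h ((e' ω).2)) b
        = prob (fun _ : R × B => c K N) (fun x => h x.2) b :=
      prob_comp_equiv e' (c K N) (fun x : R × B => h x.2) b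
    rw [h0, h1, h2, hc]
    exact prob_snd cA cB hcardA h b
  have hPair : prob (fun _ : Om K N => c K N) (fun ω => (X ω, Y ω)) (a, b)
      = prob (fun _ : R => cA) (fun r => r) a * prob (fun _ : B => cB) h b := by
    have h0 : prob (fun _ : Om K N => c K N) (fun ω => (X ω, Y ω)) (a, b)
        = prob (fun _ : Om K N => c K N) (fun ω => (X (dbψ K N ω), Y (dbψ K N ω))) (a, b) :=
      (prob_comp_bij (dbψ K N) (dbψ_invol K N).bijective (c K N)
        (fun ω => (X ω, Y ω)) (a, b)).symm
    have h1 : (fun ω : Om K N => (X (dbψ K N ω), Y (dbψ K N ω)))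
        = fun ω => ((e' ω).1, h ((e' ω).2)) := by
      funext ω
      rw [hXψ ω, hYψ ω]
    have h2 : prob (fun _ : Om K N => c K N) (fun ω : Om K N => ((e' ω).1, h ((e' ω).2))) (a, b)
        = prob (fun _ : R × B => c K N) (fun x => (x.1, h x.2)) (a, b) :=
      prob_comp_equiv e' (c K N) (fun x : R × B => (x.1, h x.2)) (a, b)
    rw [h0, h1, h2, hc]
    exact prob_prod_pair cA cB (fun r => r) h a b
  rw [hPair, hX, hY]

lemma user_priv (n : Fin N) (k k' : Fin K) :
    IdentDist (fun _ : Om K N => c K N)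
      (fun ω : Om K N => (Qv K N k n ω, Av K N k n ω, (fun j => Wv K N j ω), Sv K N ω))
      (fun ω : Om K N => (Qv K N k' n ω, Av K N k' n ω, (fun j => Wv K N j ω), Sv K N ω)) := by
  apply identDist_of_invol (c K N) _ _ (upφ K N k k' n) (upφ_invol K N k k' n)
  intro ω
  exact Prod.ext (upφ_Q K N k k' n ω) (Prod.ext (upφ_A K N k k' n ω) rfl)

end SPIRc

/-- (Achievability of the SPIR capacity.) For all `K ≥ 2` and `N ≥ 2`
there exists a zero-error SPIR scheme with message length `L = N − 1` bits, one-bit answers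
(total download `D = N`, rate `1 − 1/N`), and common randomness a single uniform bit
(`H(S) = 1`, so `ρ = H(S)/L = 1/(N−1)`). -/
theorem spir_capacity_achievability (K N : ℕ) (hK : 2 ≤ K) (hN : 2 ≤ N) :
    ∃ sch : OneBitAnswerSPIR K N, Unif sch.p sch.S ∧ ent sch.p sch.S = 1 := by
  refine ⟨{
    Ω := SPIRc.Om K N
    p := fun _ => SPIRc.c K N
    p_nonneg := fun _ => (SPIRc.c_pos K N).le
    p_sum := SPIRc.sum_c K N
    𝓕 := SPIRc.Mat K N
    𝓠 := fun _ => SPIRc.Mat K N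
    W := SPIRc.Wv K N
    S := SPIRc.Sv K N
    F := SPIRc.Fv K N
    Q := SPIRc.Qv K N
    A := SPIRc.Av K N
    hWunif := SPIRc.unif_W K N
    hIndep := SPIRc.indep_all K N
    hQ := fun k n => ⟨SPIRc.qdet K N k n, fun _ => rfl⟩
    hA := fun k n => ⟨fun q w s => SPIRc.Adet K N q w s, fun _ => rfl⟩
    hCorrect := fun k => ⟨fun a _ i => a ⟨(i : ℕ) + 1, by have := i.isLt; omega⟩
        + a ⟨0, by omega⟩,
      fun ω => by funext i; exact (SPIRc.correct_eq K N hN k ω i).symm⟩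
    hUserPriv := fun n k k' => SPIRc.user_priv K N n k k'
    hDBPriv := fun k => SPIRc.db_priv K N hN k }, ?_, ?_⟩
  · exact SPIRc.unif_S K N
  · have hu := SPIRc.unif_S K N
    have h2 : ∀ a : ZMod 2, prob (fun _ => SPIRc.c K N) (SPIRc.Sv K N) a = 1/2 := by
      intro a
      rw [hu a, ZMod.card]
      norm_num
    show ent (fun _ => SPIRc.c K N) (SPIRc.Sv K N) = 1
    unfold ent
    simp only [h2]
    rw [Finset.sum_const, Finset.card_univ, ZMod.card, nsmul_eq_mul]
    have h3 : Real.logb 2 (1/2 : ℝ) = -1 := by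
      rw [one_div, Real.logb_inv, Real.logb_self_eq_one] <;> norm_num
    rw [h3]
    norm_num
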